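/- Let Λ = diag(λᵢ) ≻ 0 and let Σ_ν = U V^{-1} diag(λᵢ min(λᵢ,λ'ᵢ)/(λᵢ − min(λᵢ,λ'ᵢ))) V^{-T} Uᵀ where U is orthogonal, V nonsingular with U V^{-1} Λ V^{-T} Uᵀ = Λ, and λ'ᵢ < λᵢ for all i. Then (1/2) log(det(Λ + Σ_ν)/det(Σ_ν)) = (1/2) Σᵢ log(λᵢ/λ'ᵢ). -/

import Mathlib

open Matrix

/-- With `Λ = diagonal lam ≻ 0`, `U` orthogonal, `V` nonsingular with
`U V⁻¹ Λ V⁻ᵀ Uᵀ = Λ`, and coding-noise covariance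
`Sν = U V⁻¹ diag (lam i * lam' i / (lam i - lam' i)) V⁻ᵀ Uᵀ` (for `lam' i < lam i`),
one has `(1/2) log (det (Λ + Sν) / det Sν) = (1/2) ∑ log (lam i / lam' i)`. -/
theorem coding_noise_rate_identity
    {n : ℕ} (U V : Matrix (Fin n) (Fin n) ℝ)
    (lam lam' : Fin n → ℝ)
    (hlam' : ∀ i, 0 < lam' i) (hlt : ∀ i, lam' i < lam i)
    (hU : U * Uᵀ = 1) (hU' : Uᵀ * U = 1)
    (hV : IsUnit V)
    (hfix : U * V⁻¹ * Matrix.diagonal lam * (V⁻¹)ᵀ * Uᵀ = Matrix.diagonal lam) :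
    (1/2 : ℝ) * Real.log
        ((Matrix.diagonal lam +
            U * V⁻¹ *
              Matrix.diagonal (fun i =>
                lam i * min (lam i) (lam' i) / (lam i - min (lam i) (lam' i))) *
              (V⁻¹)ᵀ * Uᵀ).det /
          (U * V⁻¹ *
              Matrix.diagonal (fun i =>
                lam i * min (lam i) (lam' i) / (lam i - min (lam i) (lam' i))) *
              (V⁻¹)ᵀ * Uᵀ).det) =
      (1/2 : ℝ) * ∑ i, Real.log (lam i / lam' i) := by
  have hmin : ∀ i, min (lam i) (lam' i) = lam' i := fun i => min_eq_right (hlt i).le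
  set d : Fin n → ℝ := fun i => lam i * lam' i / (lam i - lam' i) with hd
  have hdiag : Matrix.diagonal (fun i =>
      lam i * min (lam i) (lam' i) / (lam i - min (lam i) (lam' i))) =
      Matrix.diagonal d := by
    simp only [hmin]
    rfl
  rw [hdiag]
  -- numerator rewrite
  have hnum : Matrix.diagonal lam + U * V⁻¹ * Matrix.diagonal d * (V⁻¹)ᵀ * Uᵀ =
      U * V⁻¹ * Matrix.diagonal (fun i => lam i + d i) * (V⁻¹)ᵀ * Uᵀ := by
    have : Matrix.diagonal (fun i => lam i + d i) =
        Matrix.diagonal lam + Matrix.diagonal d := by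
      rw [Matrix.diagonal_add]
    rw [this]
    simp only [Matrix.mul_add, Matrix.add_mul, hfix]
  rw [hnum]
  have hdUV : det U * det V⁻¹ * (det (V⁻¹)ᵀ * det Uᵀ) ≠ 0 := by
    have hUu : det U ≠ 0 := by
      have : det U * det Uᵀ = 1 := by rw [← det_mul, hU, det_one]
      intro h; rw [h, zero_mul] at this; exact one_ne_zero this.symm
    have hVu : det V⁻¹ ≠ 0 := by
      have hdV : IsUnit V.det := (Matrix.isUnit_iff_isUnit_det V).mp hV
      rw [Matrix.det_nonsing_inv, Ring.inverse_eq_inv']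
      exact inv_ne_zero hdV.ne_zero
    rw [Matrix.det_transpose, Matrix.det_transpose]
    positivity
  have key : ∀ e : Fin n → ℝ,
      (U * V⁻¹ * Matrix.diagonal e * (V⁻¹)ᵀ * Uᵀ).det =
        det U * det V⁻¹ * (det (V⁻¹)ᵀ * det Uᵀ) * ∏ i, e i := by
    intro e
    rw [det_mul, det_mul, det_mul, det_mul, det_diagonal]
    ring
  rw [key, key]
  rw [mul_div_mul_left _ _ hdUV]
  have hentry : ∀ i, (lam i + d i) / d i = lam i / lam' i := by
    intro i
    have h1 : lam i - lam' i ≠ 0 := sub_ne_zero.mpr (hlt i).ne'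
    have h2 : lam' i ≠ 0 := (hlam' i).ne'
    have h3 : lam i ≠ 0 := (lt_trans (hlam' i) (hlt i)).ne'
    simp only [hd]
    field_simp
    ring
  rw [← Finset.prod_div_distrib]
  have : ∀ i ∈ Finset.univ, (lam i + d i) / d i = lam i / lam' i :=
    fun i _ => hentry i
  rw [Finset.prod_congr rfl this]
  rw [Real.log_prod (fun i _ => by
    have h2 : lam' i ≠ 0 := (hlam' i).ne'
    have h3 : lam i ≠ 0 := (lt_trans (hlam' i) (hlt i)).ne'
    exact div_ne_zero h3 h2)]
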